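/- Let Y = {a, b} with a < b. There is no social welfare function W: Y^ℕ → ℝ representing a social welfare order that satisfies Upper Asymptotic Pareto and Anonymity. -/

import Mathlib

open Filter Topology

noncomputable def upperDensity (S : Set ℕ) : ℝ :=
  Filter.limsup (fun n : ℕ => (Nat.card (↥(S ∩ Set.Icc 1 n)) : ℝ) / (n : ℝ)) Filter.atTop

/- ---------------- auxiliary lemmas ---------------- -/

lemma swf_ud_pos (S : Set ℕ)
    (h : ∀ m : ℕ, ∃ N : ℕ, m ≤ N ∧ 1 ≤ N ∧ Set.Icc (N+1) (2*N) ⊆ S) :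
    0 < upperDensity S := by
  have hcard : ∀ n : ℕ, Nat.card ↥(S ∩ Set.Icc 1 n) = (S ∩ Set.Icc 1 n).ncard := by
    intro n; rw [Nat.card_coe_set_eq]
  have hle1 : ∀ n : ℕ, (Nat.card ↥(S ∩ Set.Icc 1 n) : ℝ) / (n : ℝ) ≤ 1 := by
    intro n
    rcases Nat.eq_zero_or_pos n with h0 | hpos
    · simp [h0]
    · rw [div_le_one (by positivity)]
      norm_cast
      rw [hcard]
      calc (S ∩ Set.Icc 1 n).ncard ≤ (Set.Icc 1 n).ncard :=
            Set.ncard_le_ncard Set.inter_subset_right (Set.finite_Icc _ _)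
        _ = n := by
            rw [← Finset.coe_Icc, Set.ncard_coe_finset, Nat.card_Icc]; omega
  have hbdd : IsBoundedUnder (· ≤ ·) atTop
      (fun n : ℕ => (Nat.card ↥(S ∩ Set.Icc 1 n) : ℝ) / (n : ℝ)) :=
    isBoundedUnder_of ⟨1, fun n => hle1 n⟩
  have hfreq : ∃ᶠ n in atTop,
      (1/2 : ℝ) ≤ (Nat.card ↥(S ∩ Set.Icc 1 n) : ℝ) / (n : ℝ) := by
    rw [frequently_atTop]
    intro m
    obtain ⟨N, hmN, hN1, hsub⟩ := h m
    refine ⟨2 * N, by omega, ?_⟩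
    have hsub2 : Set.Icc (N+1) (2*N) ⊆ S ∩ Set.Icc 1 (2*N) := by
      intro i hi
      exact ⟨hsub hi, Set.mem_Icc.2 ⟨by simp at hi; omega, (Set.mem_Icc.1 hi).2⟩⟩
    have hge : (N : ℝ) ≤ (Nat.card ↥(S ∩ Set.Icc 1 (2*N)) : ℝ) := by
      norm_cast
      rw [hcard]
      calc N = (Set.Icc (N+1) (2*N)).ncard := by
            rw [← Finset.coe_Icc, Set.ncard_coe_finset, Nat.card_Icc]; omega
        _ ≤ _ := Set.ncard_le_ncard hsub2 ((Set.finite_Icc _ _).inter_of_right _)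
    rw [le_div_iff₀ (by positivity)]
    push_cast
    linarith
  have := le_limsup_of_frequently_le hfreq hbdd
  unfold upperDensity
  linarith

def blk (c : ℕ) : Set ℕ := Set.Icc (9^c) (2 * 9^c)

lemma blk_disj {c c' : ℕ} (h : c ≠ c') : Disjoint (blk c) (blk c') := by
  wlog hlt : c < c' generalizing c c'
  · exact (this h.symm (by omega)).symm
  · rw [Set.disjoint_left]
    rintro n ⟨-, h2⟩ ⟨h3, -⟩
    have h9 : 0 < 9^c := Nat.pow_pos (n := c) (by norm_num)
    have : 2 * 9^c < 9^c' := by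
      calc 2 * 9^c < 9 * 9^c := by omega
        _ = 9^(c+1) := by ring
        _ ≤ 9^c' := Nat.pow_le_pow_right (by norm_num) (by omega)
    omega

lemma code_inj {k j k' j' : ℕ} (hj : j < 2^k) (hj' : j' < 2^k')
    (h : 2^k + j = 2^k' + j') : k = k' ∧ j = j' := by
  have hkk : k = k' := by
    by_contra hne
    rcases Nat.lt_or_ge k k' with hlt | hge
    · have h1 : 2^(k+1) ≤ 2^k' := Nat.pow_le_pow_right (by norm_num) hlt
      have h2 : 2^k + j < 2^(k+1) := by rw [pow_succ]; omega
      omega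
    · have hlt : k' < k := by omega
      have h1 : 2^(k'+1) ≤ 2^k := Nat.pow_le_pow_right (by norm_num) hlt
      have h2 : 2^k' + j' < 2^(k'+1) := by rw [pow_succ]; omega
      omega
  subst hkk
  omega

noncomputable def jdig (t : ℝ) (k : ℕ) : ℕ := ⌊t * 2^k⌋₊

def Aset (t : ℝ) : Set ℕ :=
  {n | ∃ k j : ℕ, 1 ≤ k ∧ j < 2^k ∧ ((j : ℝ) + 1) ≤ t * 2^k ∧ n ∈ blk (2^k + j)}

noncomputable def Dset (t : ℝ) : Set ℕ := {n | ∃ k : ℕ, 1 ≤ k ∧ n ∈ blk (2^k + jdig t k)}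

noncomputable def Bset (t : ℝ) : Set ℕ := Aset t ∪ Dset t

lemma jdig_lt {t : ℝ} (ht : t < 1) (k : ℕ) : jdig t k < 2^k := by
  rcases le_or_gt 0 t with h0 | h0
  · rw [jdig, Nat.floor_lt (by positivity)]
    push_cast
    have h2 : (0:ℝ) < 2^k := by positivity
    nlinarith
  · have h2 : (0:ℝ) < 2^k := by positivity
    rw [jdig, Nat.floor_of_nonpos (by nlinarith)]
    positivity

lemma DA_disj {t : ℝ} (ht : t < 1) : Disjoint (Dset t) (Aset t) := by
  rw [Set.disjoint_left]
  rintro n ⟨k, hk1, hblk⟩ ⟨k', j', hk'1, hj', hle, hblk'⟩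
  have hcc : 2^k + jdig t k = 2^k' + j' := by
    by_contra hne
    exact ((blk_disj hne).le_bot ⟨hblk, hblk'⟩).elim
  obtain ⟨hkk, hjj⟩ := code_inj (jdig_lt ht k) hj' hcc
  subst hkk; subst hjj
  have : t * 2^k < (jdig t k : ℝ) + 1 := by
    simpa [jdig] using Nat.lt_floor_add_one (t * 2^k)
  linarith

lemma Aset_mono {t s : ℝ} (h : t ≤ s) : Aset t ⊆ Aset s := by
  rintro n ⟨k, j, hk, hj, hle, hblk⟩
  have h2 : (0:ℝ) ≤ 2^k := by positivity
  exact ⟨k, j, hk, hj, le_trans hle (by nlinarith), hblk⟩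

lemma blk_sub_Aset {t s : ℝ} (ht : 0 ≤ t) (ht1 : t < 1) {k : ℕ} (hk : 1 ≤ k)
    (hks : 1 < (s - t) * 2^k) : blk (2^k + jdig t k) ⊆ Aset s := by
  intro n hn
  refine ⟨k, jdig t k, hk, jdig_lt ht1 k, ?_, hn⟩
  have h1 : (jdig t k : ℝ) ≤ t * 2^k := by
    simpa [jdig] using Nat.floor_le (by positivity : (0:ℝ) ≤ t * 2^k)
  nlinarith

lemma BA_diff_finite {t s : ℝ} (ht : 0 ≤ t) (ht1 : t < 1) (hts : t < s) :
    (Bset t \ Aset s).Finite := by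
  obtain ⟨K, hK⟩ := pow_unbounded_of_one_lt (1 / (s - t)) (by norm_num : (1:ℝ) < 2)
  have hsub : Bset t \ Aset s ⊆ ⋃ k ∈ Finset.range (K + 1), blk (2^k + jdig t k) := by
    rintro n ⟨hnB, hnA⟩
    rcases hnB with hA | ⟨k, hk1, hblk⟩
    · exact absurd (Aset_mono hts.le hA) hnA
    · rcases Nat.lt_or_ge k (K + 1) with h | h
      · exact Set.mem_biUnion (Finset.mem_range.2 h) hblk
      · exfalso
        apply hnA
        refine blk_sub_Aset ht ht1 hk1 ?_ hblk
        have h1 : (2:ℝ)^K ≤ 2^k := by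
          apply pow_le_pow_right₀ (by norm_num); omega
        have hst : 0 < s - t := by linarith
        rw [div_lt_iff₀ hst] at hK
        calc (1:ℝ) < (s-t) * 2^K := by linarith [hK]
          _ ≤ (s-t) * 2^k := by nlinarith
  exact Set.Finite.subset (Set.Finite.biUnion (Finset.range (K+1)).finite_toSet
    (fun k _ => Set.finite_Icc _ _)) hsub

-- blocks of the midpoint u avoid Aset t
lemma blk_u_disj_Aset {t u : ℝ} (htu : t < u) (hu1 : u < 1) {k : ℕ} :
    Disjoint (blk (2^k + jdig u k)) (Aset t) := by
  rw [Set.disjoint_left]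
  rintro n hblk ⟨k', j', hk', hj', hle, hblk'⟩
  have hcc : 2^k + jdig u k = 2^k' + j' := by
    by_contra hne
    exact ((blk_disj hne).le_bot ⟨hblk, hblk'⟩).elim
  obtain ⟨hkk, hjj⟩ := code_inj (jdig_lt hu1 k) hj' hcc
  subst hkk; subst hjj
  have hfl : u * 2^k < (jdig u k : ℝ) + 1 := by
    simpa [jdig] using Nat.lt_floor_add_one (u * 2^k)
  have h2 : (0:ℝ) < 2^k := by positivity
  nlinarith

lemma blk_u_disj_Dset {t u : ℝ} (ht : 0 ≤ t) (ht1 : t < 1) (hu1 : u < 1) {k : ℕ}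
    (hk : 1 < (u - t) * 2^k) :
    Disjoint (blk (2^k + jdig u k)) (Dset t) := by
  rw [Set.disjoint_left]
  rintro n hblk ⟨k', hk', hblk'⟩
  have hcc : 2^k + jdig u k = 2^k' + jdig t k' := by
    by_contra hne
    exact ((blk_disj hne).le_bot ⟨hblk, hblk'⟩).elim
  obtain ⟨hkk, hjj⟩ := code_inj (jdig_lt hu1 k) (jdig_lt ht1 k') hcc
  subst hkk
  have hfl : u * 2^k < (jdig u k : ℝ) + 1 := by
    simpa [jdig] using Nat.lt_floor_add_one (u * 2^k)
  have h1 : (jdig t k : ℝ) ≤ t * 2^k := by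
    simpa [jdig] using Nat.floor_le (by positivity : (0:ℝ) ≤ t * 2^k)
  rw [hjj] at hfl
  linarith

open Classical in
noncomputable def ind (a b : ℝ) (S : Set ℕ) : ℕ → ℝ := fun n => if n ∈ S then b else a

lemma ind_mem (a b : ℝ) (S : Set ℕ) (i : ℕ) : ind a b S i = a ∨ ind a b S i = b := by
  unfold ind
  split
  · right; rfl
  · left; rfl

lemma ind_of_mem {a b : ℝ} {S : Set ℕ} {n : ℕ} (h : n ∈ S) : ind a b S n = b := by
  unfold ind; exact if_pos h

lemma ind_of_not_mem {a b : ℝ} {S : Set ℕ} {n : ℕ} (h : n ∉ S) : ind a b S n = a := by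
  unfold ind; exact if_neg h

lemma ind_swap (a b : ℝ) {S : Set ℕ} {f g : ℕ} (hf : f ∈ S) (hg : g ∉ S) :
    ind a b ((S \ {f}) ∪ {g}) = ind a b S ∘ Equiv.swap f g := by
  have hfg : f ≠ g := fun h => hg (h ▸ hf)
  funext n
  rw [Function.comp_apply]
  by_cases h1 : n = f
  · have e1 : n ∉ (S \ {f}) ∪ {g} := by simp [h1, hfg]
    have e2 : Equiv.swap f g n = g := by rw [h1, Equiv.swap_apply_left]
    rw [e2, ind_of_not_mem e1, ind_of_not_mem hg]
  · by_cases h2 : n = g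
    · have e1 : n ∈ (S \ {f}) ∪ {g} := Set.mem_union_right _ (by simp [h2])
      have e2 : Equiv.swap f g n = f := by rw [h2, Equiv.swap_apply_right]
      rw [e2, ind_of_mem e1, ind_of_mem hf]
    · have e1 : (n ∈ (S \ {f}) ∪ {g}) ↔ n ∈ S := by simp [h1, h2]
      have e2 : Equiv.swap f g n = n := Equiv.swap_apply_of_ne_of_ne h1 h2
      rw [e2]
      by_cases h3 : n ∈ S
      · rw [ind_of_mem (e1.mpr h3), ind_of_mem h3]
      · rw [ind_of_not_mem (fun h => h3 (e1.mp h)), ind_of_not_mem h3]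

lemma exchange (a b : ℝ) (W : (ℕ → ℝ) → ℝ)
    (hswap : ∀ (S : Set ℕ) (f g : ℕ), f ∈ S → g ∉ S →
      W (ind a b ((S \ {f}) ∪ {g})) = W (ind a b S)) :
    ∀ (F : Finset ℕ) (S T : Set ℕ), ↑F ⊆ S → T.Infinite → Disjoint T S →
    ∃ G : Finset ℕ, ↑G ⊆ T ∧ W (ind a b ((S \ ↑F) ∪ ↑G)) = W (ind a b S) := by
  intro F
  induction F using Finset.induction_on with
  | empty =>
    intro S T hFS hTinf hTS
    exact ⟨∅, by simp, by simp⟩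
  | @insert f F' hfF' ih =>
    intro S T hFS hTinf hTS
    have hF'S : ↑F' ⊆ S := fun n hn => hFS (by simp [hn])
    obtain ⟨G', hG'T, hG'W⟩ := ih S T hF'S hTinf hTS
    obtain ⟨g, hgTd⟩ := (hTinf.diff G'.finite_toSet).nonempty
    obtain ⟨hgT, hgG'⟩ := hgTd
    have hfS : f ∈ S := hFS (by simp)
    have hfG' : f ∉ (G' : Set ℕ) := fun h =>
      (Set.disjoint_left.1 hTS) (hG'T h) hfS
    have hfU : f ∈ (S \ ↑F') ∪ ↑G' := Or.inl ⟨hfS, fun h => hfF' h⟩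
    have hgU : g ∉ (S \ ↑F') ∪ ↑G' := by
      rintro (⟨hgS, -⟩ | hgG)
      · exact (Set.disjoint_left.1 hTS) hgT hgS
      · exact hgG' hgG
    have hstep := hswap ((S \ ↑F') ∪ ↑G') f g hfU hgU
    have hGf : ∀ n, n ∈ (G' : Set ℕ) → n ≠ f := fun n hn he => hfG' (he ▸ hn)
    have heq : ((((S \ ↑F') ∪ ↑G') \ {f}) ∪ {g})
        = (S \ ↑(insert f F')) ∪ ↑(insert g G') := by
      ext n
      simp only [Set.mem_union, Set.mem_diff, Set.mem_singleton_iff, Finset.coe_insert,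
        Set.mem_insert_iff, Finset.mem_coe]
      constructor
      · rintro (⟨hS | hG, hnf⟩ | hng)
        · exact Or.inl ⟨hS.1, by push_neg; exact ⟨hnf, hS.2⟩⟩
        · exact Or.inr (Or.inr hG)
        · exact Or.inr (Or.inl hng)
      · rintro (⟨hS, hn⟩ | (hng | hG))
        · push_neg at hn
          exact Or.inl ⟨Or.inl ⟨hS, hn.2⟩, hn.1⟩
        · exact Or.inr hng
        · exact Or.inl ⟨Or.inr hG, hGf n hG⟩
    refine ⟨insert g G', ?_, ?_⟩
    · intro n hn
      rcases Finset.mem_insert.1 (by exact_mod_cast hn) with h | h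
      · exact h ▸ hgT
      · exact hG'T h
    · rw [← heq, hstep, hG'W]

/-- for Y = {a,b} with a < b, there is no social welfare function
W representing a complete transitive order on Y^ℕ that satisfies Upper
Asymptotic Pareto and Anonymity.  Streams are functions ℕ → ℝ with values in
{a, b}. -/
theorem stmt_9 (a b : ℝ) (hab : a < b) :
    ¬ ∃ (R : (ℕ → ℝ) → (ℕ → ℝ) → Prop) (W : (ℕ → ℝ) → ℝ),
      -- completeness on Y^ℕ
      (∀ x y : ℕ → ℝ, (∀ i, x i = a ∨ x i = b) → (∀ i, y i = a ∨ y i = b) →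
        (R x y ∨ R y x)) ∧
      -- transitivity on Y^ℕ
      (∀ x y z : ℕ → ℝ, (∀ i, x i = a ∨ x i = b) → (∀ i, y i = a ∨ y i = b) →
        (∀ i, z i = a ∨ z i = b) → R x y → R y z → R x z) ∧
      -- W represents R on Y^ℕ
      (∀ x y : ℕ → ℝ, (∀ i, x i = a ∨ x i = b) → (∀ i, y i = a ∨ y i = b) →
        (R x y ↔ W y ≤ W x)) ∧
      -- Anonymity
      (∀ x : ℕ → ℝ, (∀ i, x i = a ∨ x i = b) → ∀ i j : ℕ,
        R x (x ∘ Equiv.swap i j) ∧ R (x ∘ Equiv.swap i j) x) ∧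
      -- Upper Asymptotic Pareto
      (∀ x y : ℕ → ℝ, (∀ i, x i = a ∨ x i = b) → (∀ i, y i = a ∨ y i = b) →
        (∀ i, y i ≤ x i) →
        ∀ S : Set ℕ, 0 < upperDensity S → (∀ i ∈ S, y i < x i) →
        (R x y ∧ ¬ R y x)) := by
  rintro ⟨R, W, -, -, hrep, hanon, hpar⟩
  have hmem : ∀ S : Set ℕ, ∀ i, ind a b S i = a ∨ ind a b S i = b :=
    fun S i => ind_mem a b S i
  -- W is invariant under moving one element of the set
  have hWswap : ∀ (S : Set ℕ) (f g : ℕ), f ∈ S → g ∉ S →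
      W (ind a b ((S \ {f}) ∪ {g})) = W (ind a b S) := by
    intro S f g hf hg
    have h1 := hanon (ind a b S) (hmem S) f g
    have hm2 : ∀ i, (ind a b S ∘ Equiv.swap f g) i = a ∨ (ind a b S ∘ Equiv.swap f g) i = b :=
      fun i => hmem S _
    have hle1 := (hrep (ind a b S) _ (hmem S) hm2).1 h1.1
    have hle2 := (hrep _ (ind a b S) hm2 (hmem S)).1 h1.2
    rw [ind_swap a b hf hg]
    exact le_antisymm hle1 hle2
  -- strict monotonicity from the Pareto axiom
  have hWlt : ∀ (S S' Sd : Set ℕ), S ⊆ S' → Sd ⊆ S' → Disjoint Sd S → 0 < upperDensity Sd →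
      W (ind a b S) < W (ind a b S') := by
    intro S S' Sd hSS hSd hdisj hud
    have hle : ∀ i, ind a b S i ≤ ind a b S' i := by
      intro i
      by_cases h : i ∈ S
      · rw [ind_of_mem h, ind_of_mem (hSS h)]
      · rw [ind_of_not_mem h]
        rcases ind_mem a b S' i with h' | h'
        · rw [h']
        · rw [h']; exact hab.le
    have hstrict : ∀ i ∈ Sd, ind a b S i < ind a b S' i := by
      intro i hi
      rw [ind_of_not_mem (Set.disjoint_left.1 hdisj hi), ind_of_mem (hSd hi)]
      exact hab
    have hp := hpar (ind a b S') (ind a b S) (hmem S') (hmem S) hle Sd hud hstrict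
    exact lt_of_not_ge (fun hge => hp.2 ((hrep _ _ (hmem S) (hmem S')).2 hge))
  -- Claim 1 : W(A_t) < W(B_t)
  have claim1 : ∀ t : ℝ, t ∈ Set.Ioo (0:ℝ) 1 →
      W (ind a b (Aset t)) < W (ind a b (Bset t)) := by
    intro t ht
    refine hWlt (Aset t) (Bset t) (Dset t) Set.subset_union_left Set.subset_union_right
      (DA_disj ht.2) ?_
    apply swf_ud_pos
    intro m
    set k := max 1 m with hk
    set c := 2^k + jdig t k with hc
    refine ⟨9^c, ?_, Nat.one_le_iff_ne_zero.2 (by positivity), ?_⟩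
    · have h1 : m ≤ k := le_max_right _ _
      have h2 : k < 2^k := Nat.lt_two_pow_self
      have h3 : 2^k ≤ c := by omega
      have h4 : c < 9^c := Nat.lt_pow_self (by norm_num)
      omega
    · intro n hn
      refine ⟨k, le_max_left _ _, ?_⟩
      rw [← hc]
      simp only [blk, Set.mem_Icc] at hn ⊢
      omega
  -- Claim 2 : for t < s, W(B_t) < W(A_s)
  have claim2 : ∀ t s : ℝ, t ∈ Set.Ioo (0:ℝ) 1 → s ∈ Set.Ioo (0:ℝ) 1 → t < s →
      W (ind a b (Bset t)) < W (ind a b (Aset s)) := by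
    intro t s ht hs hts
    set u := (t + s) / 2 with hu
    have htu : t < u := by rw [hu]; linarith
    have hus : u < s := by rw [hu]; linarith
    have hu0 : (0:ℝ) ≤ u := by rw [hu]; linarith [ht.1, hs.1]
    have hu1 : u < 1 := by linarith [hs.2]
    obtain ⟨K₀, hK₀⟩ := pow_unbounded_of_one_lt
      (max (1 / (u - t)) (1 / (s - u))) (by norm_num : (1:ℝ) < 2)
    set K := max K₀ 1 with hKdef
    have hK1 : 1 ≤ K := le_max_right _ _
    have hKprop : ∀ k, K ≤ k → 1 < (u - t) * 2^k ∧ 1 < (s - u) * 2^k := by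
      intro k hk
      have h2 : (2:ℝ)^K₀ ≤ 2^k := by
        apply pow_le_pow_right₀ (by norm_num)
        calc K₀ ≤ K := le_max_left _ _
          _ ≤ k := hk
      have hut : (0:ℝ) < u - t := by linarith
      have hsu : (0:ℝ) < s - u := by linarith
      constructor
      · have := lt_of_le_of_lt (le_max_left (1/(u-t)) (1/(s-u))) hK₀
        rw [div_lt_iff₀ hut] at this
        nlinarith
      · have := lt_of_le_of_lt (le_max_right (1/(u-t)) (1/(s-u))) hK₀
        rw [div_lt_iff₀ hsu] at this
        nlinarith
    -- the u-blocks with index ≥ K avoid B_t and lie in A_s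
    have hblkB : ∀ k, K ≤ k → Disjoint (blk (2^k + jdig u k)) (Bset t) := by
      intro k hk
      rw [Bset, Set.disjoint_union_right]
      exact ⟨blk_u_disj_Aset htu hu1, blk_u_disj_Dset (le_of_lt ht.1) ht.2 hu1 (hKprop k hk).1⟩
    have hblkA : ∀ k, K ≤ k → blk (2^k + jdig u k) ⊆ Aset s :=
      fun k hk => blk_sub_Aset hu0 hu1 (le_trans hK1 hk) (hKprop k hk).2
    have hhead : ∀ k : ℕ, 9^(2^k + jdig u k) ∈ blk (2^k + jdig u k) := by
      intro k
      constructor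
      · exact le_rfl
      · have : 0 < 9^(2^k + jdig u k) := by positivity
        omega
    have hcodemono : StrictMono (fun k => 2^k + jdig u k) := by
      apply strictMono_nat_of_lt_succ
      intro k
      have h1 : jdig u k < 2^k := jdig_lt hu1 k
      have h2 : (2:ℕ)^(k+1) = 2 * 2^k := by ring
      show 2^k + jdig u k < 2^(k+1) + jdig u (k+1)
      omega
    have hheadmono : StrictMono (fun k => 9^(2^k + jdig u k)) := by
      intro k k' hkk
      exact Nat.pow_lt_pow_right (by norm_num) (hcodemono hkk)
    set T : Set ℕ := (fun k => 9^(2^k + jdig u k)) '' Set.Ici K with hTdef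
    have hTinf : T.Infinite :=
      Set.Infinite.image (hheadmono.injective.injOn) (Set.Ici_infinite K)
    have hTdisjB : Disjoint T (Bset t) := by
      rw [Set.disjoint_left]
      rintro n ⟨k, hk, rfl⟩ hnB
      exact Set.disjoint_left.1 (hblkB k hk) (hhead k) hnB
    have hTsubA : T ⊆ Aset s := by
      rintro n ⟨k, hk, rfl⟩
      exact hblkA k hk (hhead k)
    have hfin : (Bset t \ Aset s).Finite := BA_diff_finite (le_of_lt ht.1) ht.2 hts
    set F : Finset ℕ := hfin.toFinset with hFdef
    have hFcoe : (F : Set ℕ) = Bset t \ Aset s := hfin.coe_toFinset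
    have hFsub : (F : Set ℕ) ⊆ Bset t := by rw [hFcoe]; exact Set.diff_subset
    obtain ⟨G, hGT, hGW⟩ := exchange a b W hWswap F (Bset t) T hFsub hTinf hTdisjB
    set S' := (Bset t \ ↑F) ∪ (G : Set ℕ) with hS'def
    have hS'A : S' ⊆ Aset s := by
      rintro n (⟨hnB, hnF⟩ | hnG)
      · by_contra hnA
        exact hnF (by rw [hFcoe]; exact ⟨hnB, hnA⟩)
      · exact hTsubA (hGT hnG)
    set Sd : Set ℕ := {n | ∃ k, K ≤ k ∧
      n ∈ Set.Icc (9^(2^k + jdig u k) + 1) (2 * 9^(2^k + jdig u k))} with hSddef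
    have hSdblk : ∀ n ∈ Sd, ∃ k, K ≤ k ∧ n ∈ blk (2^k + jdig u k) := by
      rintro n ⟨k, hk, hn⟩
      refine ⟨k, hk, ?_⟩
      simp only [Set.mem_Icc] at hn
      exact ⟨by omega, hn.2⟩
    have hSdA : Sd ⊆ Aset s := by
      intro n hn
      obtain ⟨k, hk, hblk⟩ := hSdblk n hn
      exact hblkA k hk hblk
    have hSddisj : Disjoint Sd S' := by
      rw [Set.disjoint_left]
      rintro n hn (⟨hnB, -⟩ | hnG)
      · obtain ⟨k, hk, hblk⟩ := hSdblk n hn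
        exact Set.disjoint_left.1 (hblkB k hk) hblk hnB
      · obtain ⟨k, hk, hn'⟩ := hn
        obtain ⟨k', hk', hne⟩ := hGT hnG
        have hne' : 9^(2^k' + jdig u k') = n := hne
        rcases eq_or_ne k k' with rfl | hkne
        · have h9 : 0 < 9^(2^k + jdig u k) := by positivity
          simp only [Set.mem_Icc] at hn'
          omega
        · have hcne : 2^k + jdig u k ≠ 2^k' + jdig u k' :=
            fun h => hkne (hcodemono.injective (by exact h))
          refine Set.disjoint_left.1 (blk_disj hcne) ?_ (hne' ▸ hhead k')
          simp only [Set.mem_Icc] at hn'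
          exact ⟨by omega, hn'.2⟩
    have hSdud : 0 < upperDensity Sd := by
      apply swf_ud_pos
      intro m
      set k := max K m with hk
      set c := 2^k + jdig u k with hc
      refine ⟨9^c, ?_, Nat.one_le_iff_ne_zero.2 (by positivity), ?_⟩
      · have h1 : m ≤ k := le_max_right _ _
        have h2 : k < 2^k := Nat.lt_two_pow_self
        have h3 : 2^k ≤ c := by omega
        have h4 : c < 9^c := Nat.lt_pow_self (by norm_num)
        omega
      · intro n hn
        exact ⟨k, le_max_left _ _, hn⟩
    have hfinal := hWlt S' (Aset s) Sd hS'A hSdA hSddisj hSdud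
    rw [hS'def] at hfinal
    rw [hGW] at hfinal
    exact hfinal
  -- assemble the contradiction : uncountably many disjoint rational gaps
  have hbtwn : ∀ t : Set.Ioo (0:ℝ) 1, ∃ q : ℚ,
      W (ind a b (Aset t.1)) < (q : ℝ) ∧ (q : ℝ) < W (ind a b (Bset t.1)) :=
    fun t => exists_rat_btwn (claim1 t.1 t.2)
  choose q hq1 hq2 using hbtwn
  have hmono : ∀ t t' : Set.Ioo (0:ℝ) 1, t.1 < t'.1 → (q t : ℝ) < (q t' : ℝ) := by
    intro t t' h
    calc (q t : ℝ) < W (ind a b (Bset t.1)) := hq2 t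
      _ < W (ind a b (Aset t'.1)) := claim2 t.1 t'.1 t.2 t'.2 h
      _ < (q t' : ℝ) := hq1 t'
  have hinj : Function.Injective q := by
    intro t t' h
    rcases lt_trichotomy t.1 t'.1 with hlt | heq | hgt
    · exact absurd (congrArg (fun r : ℚ => (r : ℝ)) h) (ne_of_lt (hmono t t' hlt))
    · exact Subtype.ext heq
    · exact absurd (congrArg (fun r : ℚ => (r : ℝ)) h).symm (ne_of_lt (hmono t' t hgt))
  have hcnt : Countable (Set.Ioo (0:ℝ) 1) := hinj.countable
  have h1 : Cardinal.mk (Set.Ioo (0:ℝ) 1) ≤ Cardinal.aleph0 := Cardinal.mk_le_aleph0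
  rw [Cardinal.mk_Ioo_real (by norm_num : (0:ℝ) < 1)] at h1
  exact absurd h1 (not_le.2 Cardinal.aleph0_lt_continuum)
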